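/- arXiv:1708.06657 — 2 statements merged into one kernel-verified Lean document; each statement's English description precedes it below -/
import Mathlib

section
/- (Sobolev's inequality) Let Φ : ℝ^d → [0,∞) be an N_∞ function, A_Φ its greatest convex radial minorant, identified with the invertible increasing function Ā : [0,∞) → [0,∞) via A_Φ(x) = Ā(|x|). For every u ∈ W^1L^Φ([0,T],ℝ^d) one has sup_{t∈[0,T]} |u(t)| ≤ Ā^{−1}(1/T) · max{1, T} · ( ‖u‖_{L^Φ} + ‖u'‖_{L^Φ} ). -/
open MeasureTheory Filter Set
open scoped ENNReal RealInnerProductSpace Topology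

noncomputable section

/-- `ℝ^d` with the euclidean norm. -/
abbrev Ed (d : ℕ) : Type := EuclideanSpace ℝ (Fin d)

/-- `Φ` is an `N_∞` function: differentiable, convex, nonnegative, vanishing exactly at `0`,
even, and superlinear at infinity. -/
def IsNInf {m : ℕ} (Φ : Ed m → ℝ) : Prop :=
  Differentiable ℝ Φ ∧ ConvexOn ℝ Set.univ Φ ∧ (∀ y, 0 ≤ Φ y) ∧ Φ 0 = 0 ∧
    (∀ y, y ≠ 0 → 0 < Φ y) ∧ (∀ y, Φ (-y) = Φ y) ∧
    Tendsto (fun y => Φ y / ‖y‖) (comap (fun y : Ed m => ‖y‖) atTop) atTop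

variable {d : ℕ}

/-- The modular `ρ_Φ(u) = ∫_0^T Φ(u(t)) dt`, as an extended nonnegative real. -/
def rhoE (T : ℝ) (Φ : Ed d → ℝ) (u : ℝ → Ed d) : ℝ≥0∞ :=
  ∫⁻ t in Icc (0:ℝ) T, ENNReal.ofReal (Φ (u t))

/-- `u ∈ L^Φ([0,T], ℝ^d)`. -/
def MemLphi (T : ℝ) (Φ : Ed d → ℝ) (u : ℝ → Ed d) : Prop :=
  AEMeasurable u (volume.restrict (Icc (0:ℝ) T)) ∧
    ∃ l : ℝ, 0 < l ∧ rhoE T Φ (fun t => l • u t) < ⊤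

/-- The Luxemburg norm of `u` on `[0,T]`. -/
def luxNorm (T : ℝ) (Φ : Ed d → ℝ) (u : ℝ → Ed d) : ℝ :=
  sInf {l : ℝ | 0 < l ∧ rhoE T Φ (fun t => l⁻¹ • u t) ≤ 1}

/-- `u ∈ W^1L^Φ([0,T], ℝ^d)` with a.e. derivative `u'` : `u` is absolutely continuous,
being the integral of the (integrable) function `u'`, and `u' ∈ L^Φ`. -/
def MemW1Lphi (T : ℝ) (Φ : Ed d → ℝ) (u u' : ℝ → Ed d) : Prop :=
  IntegrableOn u' (Icc (0:ℝ) T) ∧ MemLphi T Φ u' ∧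
    ∀ t ∈ Icc (0:ℝ) T, u t = u 0 + ∫ s in (0:ℝ)..t, u' s

/-- `Ψ` is a convex, nonnegative, radial minorant of `Φ`. -/
def RadialConvexMinorant (Φ Ψ : Ed d → ℝ) : Prop :=
  ConvexOn ℝ Set.univ Ψ ∧ (∀ x, 0 ≤ Ψ x) ∧ (∀ x y, ‖x‖ = ‖y‖ → Ψ x = Ψ y) ∧ ∀ x, Ψ x ≤ Φ x

/-- `A_Φ`, the greatest convex radial minorant of `Φ`. -/
def APhi (Φ : Ed d → ℝ) (x : Ed d) : ℝ :=
  sSup {r : ℝ | ∃ Ψ, RadialConvexMinorant Φ Ψ ∧ r = Ψ x}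


section Aux

variable {d : ℕ} {Φ : Ed d → ℝ}

lemma rcm_zero (hpos : ∀ y, 0 ≤ Φ y) : RadialConvexMinorant Φ (fun _ => 0) :=
  ⟨convexOn_const 0 convex_univ, fun _ => le_rfl, fun _ _ _ => rfl, hpos⟩

lemma aphi_set_nonempty (hpos : ∀ y, 0 ≤ Φ y) (x : Ed d) :
    {r : ℝ | ∃ Ψ, RadialConvexMinorant Φ Ψ ∧ r = Ψ x}.Nonempty :=
  ⟨0, fun _ => 0, rcm_zero hpos, rfl⟩

lemma aphi_set_bddAbove (x : Ed d) :
    BddAbove {r : ℝ | ∃ Ψ, RadialConvexMinorant Φ Ψ ∧ r = Ψ x} := by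
  refine ⟨Φ x, ?_⟩
  rintro r ⟨Ψ, hΨ, rfl⟩
  exact hΨ.2.2.2 x

lemma aphi_nonneg (hpos : ∀ y, 0 ≤ Φ y) (x : Ed d) : 0 ≤ APhi Φ x :=
  le_csSup (aphi_set_bddAbove x) ⟨fun _ => 0, rcm_zero hpos, rfl⟩

lemma aphi_le_phi (hpos : ∀ y, 0 ≤ Φ y) (x : Ed d) : APhi Φ x ≤ Φ x := by
  refine csSup_le (aphi_set_nonempty hpos x) ?_
  rintro r ⟨Ψ, hΨ, rfl⟩
  exact hΨ.2.2.2 x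

lemma aphi_zero (hpos : ∀ y, 0 ≤ Φ y) (h0 : Φ 0 = 0) : APhi Φ 0 = 0 :=
  le_antisymm (h0 ▸ aphi_le_phi hpos 0) (aphi_nonneg hpos 0)

lemma aphi_convexOn (hpos : ∀ y, 0 ≤ Φ y) : ConvexOn ℝ Set.univ (APhi Φ) := by
  refine ⟨convex_univ, fun x _ y _ a b ha hb hab => ?_⟩
  refine csSup_le (aphi_set_nonempty hpos _) ?_
  rintro r ⟨Ψ, hΨ, rfl⟩
  calc Ψ (a • x + b • y) ≤ a * Ψ x + b * Ψ y :=
        hΨ.1.2 (Set.mem_univ x) (Set.mem_univ y) ha hb hab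
    _ ≤ a * APhi Φ x + b * APhi Φ y := by
        gcongr
        · exact le_csSup (aphi_set_bddAbove x) ⟨Ψ, hΨ, rfl⟩
        · exact le_csSup (aphi_set_bddAbove y) ⟨Ψ, hΨ, rfl⟩

lemma aphi_radial {x y : Ed d} (h : ‖x‖ = ‖y‖) : APhi Φ x = APhi Φ y := by
  unfold APhi
  congr 1
  ext r
  constructor <;> rintro ⟨Ψ, hΨ, rfl⟩
  · exact ⟨Ψ, hΨ, hΨ.2.2.1 x y h⟩
  · exact ⟨Ψ, hΨ, hΨ.2.2.1 y x h.symm⟩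

lemma aphi_mono (hpos : ∀ y, 0 ≤ Φ y) (h0 : Φ 0 = 0) {x y : Ed d} (h : ‖x‖ ≤ ‖y‖) :
    APhi Φ x ≤ APhi Φ y := by
  rcases eq_or_lt_of_le (norm_nonneg y) with hy | hy
  · have hx : ‖x‖ = ‖y‖ := by have := norm_nonneg x; linarith
    exact (aphi_radial hx).le
  · set c : ℝ := ‖x‖ / ‖y‖ with hc
    have hc0 : 0 ≤ c := div_nonneg (norm_nonneg x) (norm_nonneg y)
    have hc1 : c ≤ 1 := div_le_one_of_le₀ h (norm_nonneg y)
    have hxy : APhi Φ x = APhi Φ (c • y) := by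
      refine aphi_radial ?_
      rw [norm_smul, Real.norm_eq_abs, abs_of_nonneg hc0, hc, div_mul_cancel₀]
      exact hy.ne'
    rw [hxy]
    have := (aphi_convexOn (Φ := Φ) hpos).2 (Set.mem_univ y) (Set.mem_univ (0 : Ed d))
      hc0 (by linarith : (0:ℝ) ≤ 1 - c) (by ring)
    simp only [smul_zero, add_zero, aphi_zero hpos h0, mul_zero] at this
    calc APhi Φ (c • y) ≤ c * APhi Φ y := this
      _ ≤ 1 * APhi Φ y := by gcongr; exact aphi_nonneg hpos y
      _ = APhi Φ y := one_mul _

lemma aphi_continuous (hpos : ∀ y, 0 ≤ Φ y) : Continuous (APhi Φ) := by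
  have := (aphi_convexOn (Φ := Φ) hpos).continuousOn isOpen_univ
  exact continuousOn_univ.mp this


lemma aphi_inv_le (hpos : ∀ y, 0 ≤ Φ y) (h0 : Φ 0 = 0) {e : Ed d} (he : ‖e‖ = 1)
    {r a b : ℝ} (hr : 0 < r) (hb : 0 ≤ b) (hbr : APhi Φ (b • e) = r)
    (ha : 0 ≤ a) (h : APhi Φ (a • e) ≤ r) : a ≤ b := by
  by_contra hab
  push_neg at hab
  have ha0 : 0 < a := hb.trans_lt hab
  have hnorm : ∀ c : ℝ, 0 ≤ c → ‖c • e‖ = c := fun c hc => by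
    rw [norm_smul, he, Real.norm_eq_abs, abs_of_nonneg hc, mul_one]
  have hmono : r ≤ APhi Φ (a • e) := by
    rw [← hbr]
    exact aphi_mono hpos h0 (by rw [hnorm a ha, hnorm b hb]; exact hab.le)
  have heq : APhi Φ (a • e) = r := le_antisymm h hmono
  have hc0 : 0 ≤ b / a := div_nonneg hb ha0.le
  have hc1 : b / a < 1 := (div_lt_one ha0).mpr hab
  have hkey : APhi Φ (b • e) ≤ (b / a) * APhi Φ (a • e) := by
    have hconv := (aphi_convexOn (Φ := Φ) hpos).2 (Set.mem_univ (a • e))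
      (Set.mem_univ (0 : Ed d)) hc0 (by linarith : (0:ℝ) ≤ 1 - b / a) (by ring)
    have hsm : (b / a) • (a • e) = b • e := by
      rw [smul_smul, div_mul_cancel₀ _ ha0.ne']
    simpa [hsm, aphi_zero hpos h0] using hconv
  rw [hbr, heq] at hkey
  nlinarith

lemma exists_scale {T lam : ℝ} (hlam : 0 < lam)
    (hconv : ConvexOn ℝ Set.univ Φ) (h0 : Φ 0 = 0) (hpos : ∀ y, 0 ≤ Φ y)
    {u : ℝ → Ed d} (hfin : rhoE T Φ (fun t => lam • u t) < ⊤) :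
    ∃ c : ℝ, 0 < c ∧ rhoE T Φ (fun t => c⁻¹ • u t) ≤ 1 := by
  set M : ℝ≥0∞ := rhoE T Φ (fun t => lam • u t) with hM
  set ε : ℝ := min 1 (M.toReal + 1)⁻¹ with hε
  have hMt : 0 ≤ M.toReal := ENNReal.toReal_nonneg
  have hε0 : 0 < ε := lt_min one_pos (by positivity)
  have hε1 : ε ≤ 1 := min_le_left _ _
  refine ⟨(ε * lam)⁻¹, by positivity, ?_⟩
  have hptw : ∀ t, Φ ((((ε * lam)⁻¹)⁻¹) • u t) ≤ ε * Φ (lam • u t) := by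
    intro t
    rw [inv_inv]
    have : (ε * lam) • u t = ε • (lam • u t) := by rw [smul_smul]
    rw [this]
    have hconv2 := hconv.2 (Set.mem_univ (lam • u t)) (Set.mem_univ (0 : Ed d))
      hε0.le (by linarith : (0:ℝ) ≤ 1 - ε) (by ring)
    simpa [h0] using hconv2
  calc rhoE T Φ (fun t => ((ε * lam)⁻¹)⁻¹ • u t)
      ≤ ∫⁻ t in Icc (0:ℝ) T, ENNReal.ofReal ε * ENNReal.ofReal (Φ (lam • u t)) := by
        refine lintegral_mono fun t => ?_
        rw [← ENNReal.ofReal_mul hε0.le]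
        exact ENNReal.ofReal_le_ofReal (hptw t)
    _ = ENNReal.ofReal ε * M := by
        rw [hM]
        exact lintegral_const_mul' _ _ ENNReal.ofReal_ne_top
    _ ≤ 1 := by
        have hMle : M ≤ ENNReal.ofReal M.toReal := le_of_eq (ENNReal.ofReal_toReal hfin.ne).symm
        calc ENNReal.ofReal ε * M ≤ ENNReal.ofReal (M.toReal + 1)⁻¹ * ENNReal.ofReal M.toReal :=
              mul_le_mul' (ENNReal.ofReal_le_ofReal (min_le_right _ _)) hMle
          _ = ENNReal.ofReal ((M.toReal + 1)⁻¹ * M.toReal) := by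
              rw [ENNReal.ofReal_mul (by positivity)]
          _ ≤ 1 := by
              rw [← ENNReal.ofReal_one]
              refine ENNReal.ofReal_le_ofReal ?_
              rw [inv_mul_le_iff₀ (by positivity)]
              linarith

end Aux

set_option maxHeartbeats 2000000 in
/-- **Sobolev's inequality.** For `u ∈ W^1L^Φ`:
`sup_{t∈[0,T]} |u(t)| ≤ Ā⁻¹(1/T) ⬝ max{1,T} ⬝ (‖u‖_{L^Φ} + ‖u'‖_{L^Φ})`. -/
theorem statement3 {d : ℕ} (T : ℝ) (hT : 0 < T) (Φ : Ed d → ℝ) (hΦ : IsNInf Φ)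
    (Abar AbarInv : ℝ → ℝ)
    (hAbar : ∀ x : Ed d, Abar ‖x‖ = APhi Φ x)
    (hAbarInv : ∀ r ∈ Ici (0:ℝ), AbarInv r ∈ Ici (0:ℝ) ∧ Abar (AbarInv r) = r)
    (u u' : ℝ → Ed d) (hu : MemW1Lphi T Φ u u') (t : ℝ) (ht : t ∈ Icc (0:ℝ) T) :
    ‖u t‖ ≤ AbarInv (1 / T) * max 1 T * (luxNorm T Φ u + luxNorm T Φ u') := by
  obtain ⟨hΦdiff, hΦconv, hΦpos, hΦ0, -, -, -⟩ := hΦ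
  have hΦcont : Continuous Φ := hΦdiff.continuous
  have hmax0 : (0:ℝ) < max 1 T := lt_of_lt_of_le one_pos (le_max_left _ _)
  have hrT : (0:ℝ) < 1 / T := by positivity
  have hbmem := hAbarInv (1 / T) (le_of_lt hrT)
  have hb0 : 0 ≤ AbarInv (1 / T) := hbmem.1
  set b : ℝ := AbarInv (1 / T) with hbdef
  have hbr : Abar b = 1 / T := hbmem.2
  have hlux_u_nonneg : 0 ≤ luxNorm T Φ u := Real.sInf_nonneg (fun x hx => hx.1.le)
  have hlux_u'_nonneg : 0 ≤ luxNorm T Φ u' := Real.sInf_nonneg (fun x hx => hx.1.le)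
  rcases Nat.eq_zero_or_pos d with rfl | hd
  · have h1 : ‖u t‖ = 0 := by rw [Subsingleton.elim (u t) 0, norm_zero]
    rw [h1]
    exact mul_nonneg (mul_nonneg hb0 hmax0.le) (add_nonneg hlux_u_nonneg hlux_u'_nonneg)
  -- main case
  set e : Ed d := EuclideanSpace.single ⟨0, hd⟩ (1:ℝ) with hedef
  have he : ‖e‖ = 1 := by simp [hedef, EuclideanSpace.norm_single]
  have habar : ∀ a : ℝ, 0 ≤ a → Abar a = APhi Φ (a • e) := by
    intro a ha
    rw [← hAbar (a • e), norm_smul, he, Real.norm_eq_abs, abs_of_nonneg ha, mul_one]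
  have hbe : APhi Φ (b • e) = 1 / T := by rw [← habar b hb0, hbr]
  have hbpos : 0 < b := by
    rcases hb0.lt_or_eq with h | h
    · exact h
    · exfalso
      have := hbe
      rw [← h, zero_smul, aphi_zero hΦpos hΦ0] at this
      exact absurd this.symm (ne_of_gt hrT)
  -- continuity of u on [0, T]
  have hu'int : IntegrableOn u' (Icc (0:ℝ) T) := hu.1
  have hu'intu : IntegrableOn u' (Set.uIcc (0:ℝ) T) := by
    rwa [Set.uIcc_of_le hT.le]
  have hucont : ContinuousOn u (Icc (0:ℝ) T) := by
    have h1 : ContinuousOn (fun s => u 0 + ∫ r in (0:ℝ)..s, u' r) (Icc (0:ℝ) T) := by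
      have := (intervalIntegral.continuousOn_primitive_interval (a := (0:ℝ)) (b := T) hu'intu)
      rw [Set.uIcc_of_le hT.le] at this
      exact continuousOn_const.add this
    exact h1.congr hu.2.2 |>.congr (fun x hx => rfl)
  have hAcont : Continuous (APhi Φ) := aphi_continuous hΦpos
  -- the Luxemburg sets
  set S : Set ℝ := {l | 0 < l ∧ rhoE T Φ (fun t => l⁻¹ • u t) ≤ 1} with hSdef
  set S' : Set ℝ := {l | 0 < l ∧ rhoE T Φ (fun t => l⁻¹ • u' t) ≤ 1} with hS'def
  have hSne : S.Nonempty := by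
    have hfin : rhoE T Φ (fun t => (1:ℝ) • u t) < ⊤ := by
      obtain ⟨s₁, hs₁, hmax'⟩ := isCompact_Icc.exists_isMaxOn
        ⟨0, Set.left_mem_Icc.mpr hT.le⟩ (hΦcont.comp_continuousOn hucont)
      have hmax := isMaxOn_iff.mp hmax'
      have hle : ∀ᵐ s ∂(volume.restrict (Icc (0:ℝ) T)),
          ENNReal.ofReal (Φ ((1:ℝ) • u s)) ≤ ENNReal.ofReal (Φ (u s₁)) := by
        refine (ae_restrict_iff' measurableSet_Icc).mpr (Filter.Eventually.of_forall fun s hs => ?_)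
        rw [one_smul]
        exact ENNReal.ofReal_le_ofReal (hmax s hs)
      calc rhoE T Φ (fun t => (1:ℝ) • u t)
          ≤ ∫⁻ _ in Icc (0:ℝ) T, ENNReal.ofReal (Φ (u s₁)) := lintegral_mono_ae hle
        _ = ENNReal.ofReal (Φ (u s₁)) * volume (Icc (0:ℝ) T) := by
            rw [setLIntegral_const]
        _ < ⊤ := ENNReal.mul_lt_top ENNReal.ofReal_lt_top
            (by rw [Real.volume_Icc]; exact ENNReal.ofReal_lt_top)
    obtain ⟨c, hc, hc1⟩ := exists_scale one_pos hΦconv hΦ0 hΦpos hfin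
    exact ⟨c, hc, hc1⟩
  have hS'ne : S'.Nonempty := by
    obtain ⟨lam, hlam, hfin⟩ := hu.2.1.2
    obtain ⟨c, hc, hc1⟩ := exists_scale hlam hΦconv hΦ0 hΦpos hfin
    exact ⟨c, hc, hc1⟩
  -- the key bound
  have key : ∀ l ∈ S, ∀ l' ∈ S', ‖u t‖ ≤ b * max 1 T * (l + l') := by
    rintro l ⟨hl0, hρ⟩ l' ⟨hl'0, hρ'⟩
    obtain ⟨s₀, hs₀, hmin'⟩ := isCompact_Icc.exists_isMinOn
      ⟨0, Set.left_mem_Icc.mpr hT.le⟩ hucont.norm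
    have hmin := isMinOn_iff.mp hmin'
    -- Step A : ‖u s₀‖ ≤ l * b
    have hsm : ContinuousOn (fun s => l⁻¹ • u s) (Icc (0:ℝ) T) := hucont.const_smul l⁻¹
    have hfA : ContinuousOn (fun s => APhi Φ (l⁻¹ • u s)) (Icc (0:ℝ) T) :=
      hAcont.comp_continuousOn hsm
    have hgA : ContinuousOn (fun s => Φ (l⁻¹ • u s)) (Icc (0:ℝ) T) :=
      hΦcont.comp_continuousOn hsm
    have hfint : IntegrableOn (fun s => APhi Φ (l⁻¹ • u s)) (Icc (0:ℝ) T) := hfA.integrableOn_Icc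
    have hgint : IntegrableOn (fun s => Φ (l⁻¹ • u s)) (Icc (0:ℝ) T) := hgA.integrableOn_Icc
    have hint2 : ∫ s in Icc (0:ℝ) T, Φ (l⁻¹ • u s) ≤ 1 := by
      rw [MeasureTheory.integral_eq_lintegral_of_nonneg_ae
        (Filter.Eventually.of_forall fun s => hΦpos _)
        (hgA.aestronglyMeasurable measurableSet_Icc)]
      exact (ENNReal.toReal_mono ENNReal.one_ne_top hρ).trans_eq ENNReal.toReal_one
    have hint1 : ∫ s in Icc (0:ℝ) T, APhi Φ (l⁻¹ • u s) ≤ ∫ s in Icc (0:ℝ) T, Φ (l⁻¹ • u s) :=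
      setIntegral_mono_on hfint hgint measurableSet_Icc (fun s _ => aphi_le_phi hΦpos _)
    have hconst : T * APhi Φ (l⁻¹ • u s₀) ≤ ∫ s in Icc (0:ℝ) T, APhi Φ (l⁻¹ • u s) := by
      have hmono : ∀ s ∈ Icc (0:ℝ) T, APhi Φ (l⁻¹ • u s₀) ≤ APhi Φ (l⁻¹ • u s) := fun s hs =>
        aphi_mono hΦpos hΦ0 (by
          rw [norm_smul, norm_smul]
          exact mul_le_mul_of_nonneg_left (hmin s hs) (norm_nonneg _))
      have h2 : ∫ _ in Icc (0:ℝ) T, APhi Φ (l⁻¹ • u s₀) ≤ ∫ s in Icc (0:ℝ) T, APhi Φ (l⁻¹ • u s) :=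
        setIntegral_mono_on ((integrableOn_const_iff enorm_ne_top).mpr
          (Or.inr (by rw [Real.volume_Icc]; exact ENNReal.ofReal_lt_top))) hfint
          measurableSet_Icc hmono
      rw [setIntegral_const, Real.volume_real_Icc_of_le hT.le, sub_zero,
        smul_eq_mul] at h2
      exact h2
    have hAs : APhi Φ (l⁻¹ • u s₀) ≤ 1 / T := by
      rw [le_div_iff₀ hT]
      nlinarith
    have ha0 : 0 ≤ l⁻¹ * ‖u s₀‖ := by positivity
    have hrad : APhi Φ (l⁻¹ • u s₀) = APhi Φ ((l⁻¹ * ‖u s₀‖) • e) := by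
      refine aphi_radial ?_
      rw [norm_smul, norm_smul, he, Real.norm_eq_abs, Real.norm_eq_abs,
        abs_of_nonneg (inv_nonneg.mpr hl0.le), abs_of_nonneg ha0, mul_one]
    have hab : l⁻¹ * ‖u s₀‖ ≤ b :=
      aphi_inv_le hΦpos hΦ0 he hrT hb0 hbe ha0 (by rw [← hrad]; exact hAs)
    have hA : ‖u s₀‖ ≤ l * b := by
      have := mul_le_mul_of_nonneg_left hab hl0.le
      rw [← mul_assoc, mul_inv_cancel₀ hl0.ne', one_mul] at this
      exact this
    -- Step B : ∫ ‖u'‖ ≤ l' * T * b  (Jensen)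
    have hB : ∫ s in Icc (0:ℝ) T, ‖u' s‖ ≤ l' * T * b := by
      haveI hfm : IsFiniteMeasure (volume.restrict (Icc (0:ℝ) T)) :=
        ⟨by rw [Measure.restrict_apply_univ, Real.volume_Icc]; exact ENNReal.ofReal_lt_top⟩
      haveI hnz : NeZero (volume.restrict (Icc (0:ℝ) T)) := by
        refine ⟨Measure.measure_univ_ne_zero.mp ?_⟩
        rw [Measure.restrict_apply_univ, Real.volume_Icc, sub_zero]
        simp only [ne_eq, ENNReal.ofReal_eq_zero, not_le]
        exact hT
      have hgconv : ConvexOn ℝ Set.univ (fun r : ℝ => APhi Φ (r • e)) := by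
        refine ⟨convex_univ, fun x _ y _ p q hp hq hpq => ?_⟩
        have := (aphi_convexOn hΦpos).2 (Set.mem_univ (x • e)) (Set.mem_univ (y • e)) hp hq hpq
        simpa [add_smul, smul_smul] using this
      have hgcont : Continuous (fun r : ℝ => APhi Φ (r • e)) :=
        hAcont.comp (continuous_id.smul continuous_const)
      have hfi : Integrable (fun s => l'⁻¹ * ‖u' s‖) (volume.restrict (Icc (0:ℝ) T)) :=
        (hu'int.norm).const_mul _
      have hmeas' : AEMeasurable u' (volume.restrict (Icc (0:ℝ) T)) := hu.2.1.1
      have hkeyg : ∀ s : ℝ, APhi Φ ((l'⁻¹ * ‖u' s‖) • e) = APhi Φ (l'⁻¹ • u' s) := by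
        intro s
        refine aphi_radial ?_
        rw [norm_smul, norm_smul, he, Real.norm_eq_abs, Real.norm_eq_abs, mul_one,
          abs_of_nonneg (by positivity : (0:ℝ) ≤ l'⁻¹ * ‖u' s‖),
          abs_of_nonneg (inv_nonneg.mpr hl'0.le)]
      have hgf_aesm : AEStronglyMeasurable (fun s => APhi Φ ((l'⁻¹ * ‖u' s‖) • e))
          (volume.restrict (Icc (0:ℝ) T)) :=
        (hgcont.measurable.comp_aemeasurable ((hmeas'.norm).const_mul _)).aestronglyMeasurable
      have hlint : ∫⁻ s in Icc (0:ℝ) T, ENNReal.ofReal (APhi Φ ((l'⁻¹ * ‖u' s‖) • e)) ≤ 1 := by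
        calc ∫⁻ s in Icc (0:ℝ) T, ENNReal.ofReal (APhi Φ ((l'⁻¹ * ‖u' s‖) • e))
            ≤ ∫⁻ s in Icc (0:ℝ) T, ENNReal.ofReal (Φ (l'⁻¹ • u' s)) :=
              lintegral_mono fun s => ENNReal.ofReal_le_ofReal
                (by rw [hkeyg s]; exact aphi_le_phi hΦpos _)
          _ ≤ 1 := hρ'
      have hgi : Integrable (fun s => APhi Φ ((l'⁻¹ * ‖u' s‖) • e))
          (volume.restrict (Icc (0:ℝ) T)) := by
        refine ⟨hgf_aesm, ?_⟩
        rw [hasFiniteIntegral_iff_ofReal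
          (Filter.Eventually.of_forall fun s => aphi_nonneg hΦpos _)]
        exact lt_of_le_of_lt hlint ENNReal.one_lt_top
      have jensen := hgconv.map_average_le hgcont.continuousOn isClosed_univ
        (Filter.Eventually.of_forall fun s => Set.mem_univ _) hfi hgi
      have hμuniv : ((volume.restrict (Icc (0:ℝ) T)) Set.univ).toReal = T := by
        rw [Measure.restrict_apply_univ, Real.volume_Icc, sub_zero, ENNReal.toReal_ofReal hT.le]
      have havgg : ⨍ s, APhi Φ ((l'⁻¹ * ‖u' s‖) • e) ∂(volume.restrict (Icc (0:ℝ) T)) ≤ 1 / T := by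
        rw [MeasureTheory.average_eq, measureReal_def, hμuniv, smul_eq_mul]
        have hle1 : ∫ s in Icc (0:ℝ) T, APhi Φ ((l'⁻¹ * ‖u' s‖) • e) ≤ 1 := by
          rw [MeasureTheory.integral_eq_lintegral_of_nonneg_ae
            (Filter.Eventually.of_forall fun s => aphi_nonneg hΦpos _) hgf_aesm]
          exact (ENNReal.toReal_mono ENNReal.one_ne_top hlint).trans_eq ENNReal.toReal_one
        calc T⁻¹ * ∫ s in Icc (0:ℝ) T, APhi Φ ((l'⁻¹ * ‖u' s‖) • e) ≤ T⁻¹ * 1 :=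
              mul_le_mul_of_nonneg_left hle1 (by positivity)
          _ = 1 / T := by rw [mul_one, one_div]
      have hm0 : 0 ≤ ⨍ s, l'⁻¹ * ‖u' s‖ ∂(volume.restrict (Icc (0:ℝ) T)) := by
        rw [MeasureTheory.average_eq, measureReal_def, hμuniv, smul_eq_mul]
        exact mul_nonneg (inv_nonneg.mpr hT.le)
          (integral_nonneg (fun s => mul_nonneg (inv_nonneg.mpr hl'0.le) (norm_nonneg _)))
      have hgm : APhi Φ ((⨍ s, l'⁻¹ * ‖u' s‖ ∂(volume.restrict (Icc (0:ℝ) T))) • e) ≤ 1 / T :=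
        le_trans jensen havgg
      have hmb : ⨍ s, l'⁻¹ * ‖u' s‖ ∂(volume.restrict (Icc (0:ℝ) T)) ≤ b :=
        aphi_inv_le hΦpos hΦ0 he hrT hb0 hbe hm0 hgm
      have hintf' : ∫ s in Icc (0:ℝ) T, l'⁻¹ * ‖u' s‖ ≤ T * b := by
        have := mul_le_mul_of_nonneg_left hmb hT.le
        rw [MeasureTheory.average_eq, measureReal_def, hμuniv, smul_eq_mul, ← mul_assoc,
          mul_inv_cancel₀ hT.ne', one_mul] at this
        exact this
      have hmul : ∫ s in Icc (0:ℝ) T, l'⁻¹ * ‖u' s‖ = l'⁻¹ * ∫ s in Icc (0:ℝ) T, ‖u' s‖ :=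
        integral_const_mul _ _
      rw [hmul] at hintf'
      have := mul_le_mul_of_nonneg_left hintf' hl'0.le
      rw [← mul_assoc, mul_inv_cancel₀ hl'0.ne', one_mul] at this
      calc ∫ s in Icc (0:ℝ) T, ‖u' s‖ ≤ l' * (T * b) := this
        _ = l' * T * b := by ring
    -- Step C : ‖u t - u s₀‖ ≤ ∫ ‖u'‖
    have hCc : ‖u t - u s₀‖ ≤ ∫ s in Icc (0:ℝ) T, ‖u' s‖ := by
      have hut : u t = u 0 + ∫ s in (0:ℝ)..t, u' s := hu.2.2 t ht
      have hus : u s₀ = u 0 + ∫ s in (0:ℝ)..s₀, u' s := hu.2.2 s₀ hs₀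
      have hii : ∀ x ∈ Icc (0:ℝ) T, IntervalIntegrable u' volume 0 x := fun x hx =>
        (hu'int.mono_set (by
          rw [Set.uIcc_of_le hx.1]
          exact Set.Icc_subset_Icc le_rfl hx.2)).intervalIntegrable
      have hsub : u t - u s₀ = ∫ s in s₀..t, u' s := by
        rw [hut, hus, add_sub_add_left_eq_sub]
        exact intervalIntegral.integral_interval_sub_left (hii t ht) (hii s₀ hs₀)
      rw [hsub]
      have hbound : ∀ c x : ℝ, c ∈ Icc (0:ℝ) T → x ∈ Icc (0:ℝ) T → c ≤ x →
          ‖∫ s in c..x, u' s‖ ≤ ∫ s in Icc (0:ℝ) T, ‖u' s‖ := by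
        intro c x hc hx hcx
        calc ‖∫ s in c..x, u' s‖ ≤ ∫ s in c..x, ‖u' s‖ :=
              intervalIntegral.norm_integral_le_integral_norm hcx
          _ = ∫ s in Ioc c x, ‖u' s‖ := intervalIntegral.integral_of_le hcx
          _ ≤ ∫ s in Icc (0:ℝ) T, ‖u' s‖ :=
              setIntegral_mono_set hu'int.norm
                (Filter.Eventually.of_forall fun s => norm_nonneg _)
                (HasSubset.Subset.eventuallyLE fun s hs =>
                  ⟨hc.1.trans hs.1.le, hs.2.trans hx.2⟩)
      rcases le_total s₀ t with hst | hst
      · exact hbound s₀ t hs₀ ht hst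
      · rw [intervalIntegral.integral_symm, norm_neg]
        exact hbound t s₀ ht hs₀ hst
    have hfinal : ‖u t‖ ≤ ‖u s₀‖ + ‖u t - u s₀‖ := by
      calc ‖u t‖ = ‖u s₀ + (u t - u s₀)‖ := by rw [add_sub_cancel]
        _ ≤ ‖u s₀‖ + ‖u t - u s₀‖ := norm_add_le _ _
    nlinarith [mul_nonneg (mul_nonneg hbpos.le hl0.le) (sub_nonneg.mpr (le_max_left (1:ℝ) T)),
      mul_nonneg (mul_nonneg hbpos.le hl'0.le) (sub_nonneg.mpr (le_max_right (1:ℝ) T))]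
  -- conclude via sInf
  have hC : (0:ℝ) < b * max 1 T := mul_pos hbpos hmax0
  have hlux1 : luxNorm T Φ u = sInf S := rfl
  have hlux2 : luxNorm T Φ u' = sInf S' := rfl
  have h1 : ∀ l' ∈ S', ‖u t‖ / (b * max 1 T) - l' ≤ sInf S := by
    intro l' hl'
    refine le_csInf hSne (fun l hl => ?_)
    have hk := key l hl l' hl'
    have h2 : ‖u t‖ / (b * max 1 T) ≤ l + l' := (div_le_iff₀ hC).mpr (by nlinarith)
    linarith
  have h2 : ‖u t‖ / (b * max 1 T) - sInf S ≤ sInf S' := by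
    refine le_csInf hS'ne (fun l' hl' => ?_)
    have := h1 l' hl'
    linarith
  have h3 : ‖u t‖ / (b * max 1 T) ≤ sInf S + sInf S' := by linarith
  rw [hlux1, hlux2]
  calc ‖u t‖ = ‖u t‖ / (b * max 1 T) * (b * max 1 T) := by field_simp
    _ ≤ (sInf S + sInf S') * (b * max 1 T) := by
        exact mul_le_mul_of_nonneg_right h3 hC.le
    _ = b * max 1 T * (sInf S + sInf S') := by ring
end
end

section
/- Let Φ : ℝ^d → [0,∞) be an N_∞ function. Then u ↦ |ū| + ‖u'‖_{L^Φ}, where ū = (1/T)∫_0^T u(t) dt, defines a norm on W^1L^Φ([0,T],ℝ^d) equivalent to ‖u‖_{W^1L^Φ} = ‖u‖_{L^Φ} + ‖u'‖_{L^Φ}; that is, there exist constants c, C > 0 such that c·‖u‖_{W^1L^Φ} ≤ |ū| + ‖u'‖_{L^Φ} ≤ C·‖u‖_{W^1L^Φ} for every u ∈ W^1L^Φ. -/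
open MeasureTheory Filter Set
open scoped ENNReal RealInnerProductSpace Topology

noncomputable section

variable {d : ℕ}

lemma luxNorm_nonneg (T : ℝ) (Φ : Ed d → ℝ) (u : ℝ → Ed d) : 0 ≤ luxNorm T Φ u :=
  Real.sInf_nonneg fun _ hl => hl.1.le

lemma lux_bddBelow (T : ℝ) (Φ : Ed d → ℝ) (u : ℝ → Ed d) :
    BddBelow {l : ℝ | 0 < l ∧ rhoE T Φ (fun t => l⁻¹ • u t) ≤ 1} :=
  ⟨0, fun _ hl => hl.1.le⟩

lemma exists_r {m : ℕ} (T : ℝ) (hT : 0 < T) (Φ : Ed m → ℝ) (hΦ : IsNInf Φ) :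
    ∃ r : ℝ, 0 < r ∧ ∀ y : Ed m, ‖y‖ ≤ r → Φ y ≤ 1 / T := by
  have hc : ContinuousAt Φ 0 := hΦ.1.continuous.continuousAt
  rcases Metric.continuousAt_iff.1 hc (1 / T) (by positivity) with ⟨δ, hδ, h⟩
  refine ⟨δ / 2, by positivity, fun y hy => ?_⟩
  have h2 : dist y 0 < δ := by rw [dist_zero_right]; linarith
  have h3 := h h2
  rw [show Φ (0 : Ed m) = 0 from hΦ.2.2.2.1, Real.dist_0_eq_abs] at h3
  exact (abs_lt.1 h3).2.le

lemma exists_R {m : ℕ} (Φ : Ed m → ℝ) (hΦ : IsNInf Φ) :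
    ∃ R : ℝ, 0 ≤ R ∧ ∀ y : Ed m, ‖y‖ ≤ Φ y + R := by
  have h1 : ∀ᶠ y in comap (fun y : Ed m => ‖y‖) atTop, 1 ≤ Φ y / ‖y‖ :=
    hΦ.2.2.2.2.2.2.eventually_ge_atTop 1
  rw [eventually_comap] at h1
  rcases eventually_atTop.1 h1 with ⟨B, hB⟩
  refine ⟨max B 1, le_trans zero_le_one (le_max_right _ _), fun y => ?_⟩
  by_cases hy : ‖y‖ ≤ max B 1
  · linarith [hΦ.2.2.1 y]
  · push_neg at hy
    have hyB : B ≤ ‖y‖ := le_trans (le_max_left _ _) hy.le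
    have h4 := hB ‖y‖ hyB y rfl
    have hpos : (0:ℝ) < ‖y‖ := lt_of_lt_of_le (lt_of_lt_of_le one_pos (le_max_right B 1)) hy.le
    have h5 : ‖y‖ ≤ Φ y := by
      have := (one_le_div hpos).1 h4
      linarith
    linarith [le_trans zero_le_one (le_max_right B 1)]

lemma mem_lux_set_of_bound (T : ℝ) (hT : 0 < T) (Φ : Ed d → ℝ)
    (r : ℝ) (hr : 0 < r) (hΦr : ∀ y : Ed d, ‖y‖ ≤ r → Φ y ≤ 1 / T)
    (u : ℝ → Ed d) (M : ℝ) (hM : ∀ t ∈ Icc (0:ℝ) T, ‖u t‖ ≤ M)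
    (l : ℝ) (hl0 : 0 < l) (hl : M / r ≤ l) :
    0 < l ∧ rhoE T Φ (fun t => l⁻¹ • u t) ≤ 1 := by
  refine ⟨hl0, ?_⟩
  have hpt : ∀ t ∈ Icc (0:ℝ) T,
      ENNReal.ofReal (Φ (l⁻¹ • u t)) ≤ ENNReal.ofReal (1 / T) := by
    intro t ht
    apply ENNReal.ofReal_le_ofReal
    apply hΦr
    rw [norm_smul, norm_inv, Real.norm_eq_abs, abs_of_pos hl0]
    have hMlr : M ≤ l * r := (div_le_iff₀ hr).1 hl
    rw [inv_mul_le_iff₀ hl0]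
    exact le_trans (hM t ht) hMlr
  calc rhoE T Φ (fun t => l⁻¹ • u t)
      ≤ ∫⁻ _ in Icc (0:ℝ) T, ENNReal.ofReal (1 / T) :=
        setLIntegral_mono' measurableSet_Icc hpt
    _ = ENNReal.ofReal (1 / T) * volume (Icc (0:ℝ) T) := setLIntegral_const _ _
    _ = 1 := by
        rw [Real.volume_Icc, sub_zero, ← ENNReal.ofReal_mul (by positivity), one_div,
          inv_mul_cancel₀ hT.ne', ENNReal.ofReal_one]

lemma luxNorm_le_of_bound (T : ℝ) (hT : 0 < T) (Φ : Ed d → ℝ)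
    (r : ℝ) (hr : 0 < r) (hΦr : ∀ y : Ed d, ‖y‖ ≤ r → Φ y ≤ 1 / T)
    (u : ℝ → Ed d) (M : ℝ) (hM : ∀ t ∈ Icc (0:ℝ) T, ‖u t‖ ≤ M) :
    luxNorm T Φ u ≤ M / r := by
  have hM0 : 0 ≤ M := le_trans (norm_nonneg _) (hM 0 ⟨le_refl 0, hT.le⟩)
  have key : ∀ ε : ℝ, 0 < ε → luxNorm T Φ u ≤ M / r + ε := by
    intro ε hε
    apply csInf_le (lux_bddBelow T Φ u)
    exact mem_lux_set_of_bound T hT Φ r hr hΦr u M hM _ (by positivity) (by linarith)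
  by_contra hcon
  push_neg at hcon
  have := key ((luxNorm T Φ u - M / r) / 2) (by linarith)
  linarith

lemma lux_set_nonempty_of_mem (T : ℝ) (Φ : Ed d → ℝ) (hΦ : IsNInf Φ) (u : ℝ → Ed d)
    (hu : MemLphi T Φ u) :
    {l : ℝ | 0 < l ∧ rhoE T Φ (fun t => l⁻¹ • u t) ≤ 1}.Nonempty := by
  obtain ⟨-, l₀, hl₀, hfin⟩ := hu
  set A := rhoE T Φ (fun t => l₀ • u t) with hA
  set s : ℝ := max A.toReal 1 with hs
  have hs1 : (1:ℝ) ≤ s := le_max_right _ _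
  have hs0 : (0:ℝ) < s := lt_of_lt_of_le one_pos hs1
  refine ⟨s / l₀, by positivity, ?_⟩
  have hinv : (s / l₀)⁻¹ = s⁻¹ * l₀ := by
    field_simp
  have hpt : ∀ t ∈ Icc (0:ℝ) T,
      ENNReal.ofReal (Φ ((s / l₀)⁻¹ • u t)) ≤
        ENNReal.ofReal s⁻¹ * ENNReal.ofReal (Φ (l₀ • u t)) := by
    intro t _
    rw [← ENNReal.ofReal_mul (by positivity)]
    apply ENNReal.ofReal_le_ofReal
    have hsinv : s⁻¹ ≤ 1 := by
      have := inv_anti₀ one_pos hs1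
      simpa using this
    have hconv : Φ (s⁻¹ • (l₀ • u t) + (1 - s⁻¹) • (0 : Ed d)) ≤
        s⁻¹ * Φ (l₀ • u t) + (1 - s⁻¹) * Φ 0 :=
      hΦ.2.1.2 (Set.mem_univ _) (Set.mem_univ _) (le_of_lt (inv_pos.2 hs0))
        (sub_nonneg.2 hsinv) (by ring)
    rw [smul_zero, add_zero, hΦ.2.2.2.1, mul_zero, add_zero] at hconv
    calc Φ ((s / l₀)⁻¹ • u t) = Φ (s⁻¹ • l₀ • u t) := by
          rw [hinv, ← smul_smul]
      _ ≤ s⁻¹ * Φ (l₀ • u t) := hconv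
  have hAle : A ≤ ENNReal.ofReal s :=
    (ENNReal.le_ofReal_iff_toReal_le hfin.ne (by positivity)).2 (le_max_left _ _)
  calc rhoE T Φ (fun t => (s / l₀)⁻¹ • u t)
      ≤ ∫⁻ t in Icc (0:ℝ) T, ENNReal.ofReal s⁻¹ * ENNReal.ofReal (Φ (l₀ • u t)) :=
        setLIntegral_mono' measurableSet_Icc hpt
    _ = ENNReal.ofReal s⁻¹ * A := lintegral_const_mul' _ _ ENNReal.ofReal_ne_top
    _ ≤ ENNReal.ofReal s⁻¹ * ENNReal.ofReal s := by gcongr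
    _ = 1 := by
        rw [← ENNReal.ofReal_mul (by positivity), inv_mul_cancel₀ hs0.ne', ENNReal.ofReal_one]

lemma integral_norm_le_lux (T : ℝ) (hT : 0 < T) (Φ : Ed d → ℝ)
    (R : ℝ) (hR0 : 0 ≤ R) (hR : ∀ y : Ed d, ‖y‖ ≤ Φ y + R)
    (u : ℝ → Ed d) (hu : IntegrableOn u (Icc (0:ℝ) T))
    (hne : {l : ℝ | 0 < l ∧ rhoE T Φ (fun t => l⁻¹ • u t) ≤ 1}.Nonempty) :
    ∫ t in Icc (0:ℝ) T, ‖u t‖ ≤ (1 + R * T) * luxNorm T Φ u := by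
  set K : ℝ := 1 + R * T with hK
  have hK0 : (0:ℝ) < K := by positivity
  set q : ℝ := ∫ t in Icc (0:ℝ) T, ‖u t‖ with hq
  have hq0 : 0 ≤ q := setIntegral_nonneg measurableSet_Icc fun t _ => norm_nonneg _
  have key : ∀ l ∈ {l : ℝ | 0 < l ∧ rhoE T Φ (fun t => l⁻¹ • u t) ≤ 1}, q ≤ K * l := by
    rintro l ⟨hl0, hrho⟩
    have h1 : ENNReal.ofReal q = ∫⁻ t in Icc (0:ℝ) T, ENNReal.ofReal ‖u t‖ :=
      ofReal_integral_eq_lintegral_ofReal hu.norm (ae_of_all _ fun t => norm_nonneg _)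
    have hpt : ∀ t, ENNReal.ofReal ‖u t‖ ≤
        ENNReal.ofReal l * (ENNReal.ofReal (Φ (l⁻¹ • u t)) + ENNReal.ofReal R) := by
      intro t
      have h2 : ‖u t‖ = l * ‖l⁻¹ • u t‖ := by
        rw [norm_smul, norm_inv, Real.norm_eq_abs, abs_of_pos hl0]
        field_simp
      calc ENNReal.ofReal ‖u t‖ = ENNReal.ofReal (l * ‖l⁻¹ • u t‖) := by rw [← h2]
        _ ≤ ENNReal.ofReal (l * (Φ (l⁻¹ • u t) + R)) :=
            ENNReal.ofReal_le_ofReal (mul_le_mul_of_nonneg_left (hR _) hl0.le)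
        _ = ENNReal.ofReal l * ENNReal.ofReal (Φ (l⁻¹ • u t) + R) :=
            ENNReal.ofReal_mul hl0.le
        _ ≤ ENNReal.ofReal l * (ENNReal.ofReal (Φ (l⁻¹ • u t)) + ENNReal.ofReal R) := by
            gcongr
            exact ENNReal.ofReal_add_le
    have h3 : ENNReal.ofReal q ≤ ENNReal.ofReal l *
        (rhoE T Φ (fun t => l⁻¹ • u t) + ENNReal.ofReal R * volume (Icc (0:ℝ) T)) := by
      rw [h1]
      calc ∫⁻ t in Icc (0:ℝ) T, ENNReal.ofReal ‖u t‖
          ≤ ∫⁻ t in Icc (0:ℝ) T, ENNReal.ofReal l *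
              (ENNReal.ofReal (Φ (l⁻¹ • u t)) + ENNReal.ofReal R) :=
            lintegral_mono fun t => hpt t
        _ = ENNReal.ofReal l * ∫⁻ t in Icc (0:ℝ) T,
              (ENNReal.ofReal (Φ (l⁻¹ • u t)) + ENNReal.ofReal R) :=
            lintegral_const_mul' _ _ ENNReal.ofReal_ne_top
        _ = ENNReal.ofReal l *
              (rhoE T Φ (fun t => l⁻¹ • u t) + ENNReal.ofReal R * volume (Icc (0:ℝ) T)) := by
            rw [lintegral_add_right _ measurable_const, setLIntegral_const]; rfl
    have h4 : ENNReal.ofReal q ≤ ENNReal.ofReal (l * K) := by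
      refine h3.trans ?_
      rw [ENNReal.ofReal_mul hl0.le]
      gcongr
      rw [Real.volume_Icc, sub_zero, ← ENNReal.ofReal_mul hR0, hK, ENNReal.ofReal_add
        zero_le_one (by positivity), ENNReal.ofReal_one]
      exact add_le_add hrho le_rfl
    have := (ENNReal.ofReal_le_ofReal_iff (by positivity)).1 h4
    linarith
  have hlow : q / K ≤ luxNorm T Φ u := by
    apply le_csInf hne
    intro l hl
    rw [div_le_iff₀ hK0]
    have := key l hl
    linarith [mul_comm K l]
  calc q = K * (q / K) := by field_simp
    _ ≤ K * luxNorm T Φ u := by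
        apply mul_le_mul_of_nonneg_left hlow hK0.le


lemma u_integrableOn (T : ℝ) (hT : 0 < T) (u u' : ℝ → Ed d)
    (hu' : IntegrableOn u' (Icc (0:ℝ) T))
    (hrep : ∀ t ∈ Icc (0:ℝ) T, u t = u 0 + ∫ s in (0:ℝ)..t, u' s) :
    IntegrableOn u (Icc (0:ℝ) T) := by
  have h1 : IntegrableOn u' (uIcc (0:ℝ) T) := by rw [uIcc_of_le hT.le]; exact hu'
  have hcont : ContinuousOn (fun t => u 0 + ∫ s in (0:ℝ)..t, u' s) (Icc (0:ℝ) T) := by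
    have h2 := intervalIntegral.continuousOn_primitive_interval h1
    rw [uIcc_of_le hT.le] at h2
    exact continuousOn_const.add h2
  have h3 : ContinuousOn u (Icc (0:ℝ) T) := hcont.congr fun t ht => hrep t ht
  exact h3.integrableOn_Icc

lemma sup_bound (T : ℝ) (hT : 0 < T) (u u' : ℝ → Ed d)
    (hu' : IntegrableOn u' (Icc (0:ℝ) T))
    (hrep : ∀ t ∈ Icc (0:ℝ) T, u t = u 0 + ∫ s in (0:ℝ)..t, u' s)
    (hu : IntegrableOn u (Icc (0:ℝ) T)) :
    ∀ t ∈ Icc (0:ℝ) T,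
      ‖u t‖ ≤ ‖T⁻¹ • ∫ s in Icc (0:ℝ) T, u s‖ + ∫ s in Icc (0:ℝ) T, ‖u' s‖ := by
  intro t ht
  have hvolT : volume (Icc (0:ℝ) T) < ⊤ := by
    rw [Real.volume_Icc]; exact ENNReal.ofReal_lt_top
  have hIt : ∀ x ∈ Icc (0:ℝ) T, IntervalIntegrable u' volume 0 x := by
    intro x hx
    apply IntegrableOn.intervalIntegrable
    rw [uIcc_of_le hx.1]
    exact hu'.mono_set (Icc_subset_Icc le_rfl hx.2)
  have hdiff : ∀ s ∈ Icc (0:ℝ) T, ‖u t - u s‖ ≤ ∫ x in Icc (0:ℝ) T, ‖u' x‖ := by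
    intro s hs
    have h1 : u t - u s = ∫ x in s..t, u' x := by
      rw [hrep t ht, hrep s hs, add_sub_add_left_eq_sub]
      exact intervalIntegral.integral_interval_sub_left (hIt t ht) (hIt s hs)
    rw [h1]
    refine le_trans intervalIntegral.norm_integral_le_integral_norm_uIoc ?_
    apply setIntegral_mono_set hu'.norm (ae_of_all _ fun x => norm_nonneg _)
    apply HasSubset.Subset.eventuallyLE
    exact subset_trans uIoc_subset_uIcc (uIcc_subset_Icc hs ht)
  set ub := T⁻¹ • ∫ s in Icc (0:ℝ) T, u s with hub
  have hconst : IntegrableOn (fun _ : ℝ => u t) (Icc (0:ℝ) T) :=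
    integrableOn_const hvolT.ne
  have h2 : u t - ub = T⁻¹ • ∫ s in Icc (0:ℝ) T, (u t - u s) := by
    rw [integral_sub hconst hu, setIntegral_const, measureReal_def, Real.volume_Icc, sub_zero,
      ENNReal.toReal_ofReal hT.le, smul_sub, smul_smul, inv_mul_cancel₀ hT.ne', one_smul]
  have h3 : ‖∫ s in Icc (0:ℝ) T, (u t - u s)‖ ≤ T * ∫ x in Icc (0:ℝ) T, ‖u' x‖ := by
    refine le_trans (norm_integral_le_integral_norm _) ?_
    have h4 : ∫ s in Icc (0:ℝ) T, ‖u t - u s‖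
        ≤ ∫ _ in Icc (0:ℝ) T, (∫ x in Icc (0:ℝ) T, ‖u' x‖) :=
      setIntegral_mono_on ((hconst.sub hu).norm)
        (integrableOn_const hvolT.ne) measurableSet_Icc hdiff
    rwa [setIntegral_const, measureReal_def, Real.volume_Icc, sub_zero, ENNReal.toReal_ofReal hT.le,
      smul_eq_mul] at h4
  have h5 : ‖u t - ub‖ ≤ ∫ x in Icc (0:ℝ) T, ‖u' x‖ := by
    rw [h2, norm_smul, Real.norm_eq_abs, abs_of_pos (inv_pos.2 hT)]
    calc T⁻¹ * ‖∫ s in Icc (0:ℝ) T, (u t - u s)‖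
        ≤ T⁻¹ * (T * ∫ x in Icc (0:ℝ) T, ‖u' x‖) :=
          mul_le_mul_of_nonneg_left h3 (inv_pos.2 hT).le
      _ = ∫ x in Icc (0:ℝ) T, ‖u' x‖ := by field_simp
  calc ‖u t‖ = ‖ub + (u t - ub)‖ := by rw [add_sub_cancel]
    _ ≤ ‖ub‖ + ‖u t - ub‖ := norm_add_le _ _
    _ ≤ _ := add_le_add le_rfl h5

set_option maxHeartbeats 1000000 in
/-- `u ↦ |ū| + ‖u'‖_{L^Φ}` is a norm on `W^1L^Φ` equivalent to
`‖u‖_{W^1L^Φ} = ‖u‖_{L^Φ} + ‖u'‖_{L^Φ}`. -/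
theorem statement7 {d : ℕ} (T : ℝ) (hT : 0 < T) (Φ : Ed d → ℝ) (hΦ : IsNInf Φ) :
    ∃ c > (0:ℝ), ∃ C > (0:ℝ), ∀ u u' : ℝ → Ed d, MemW1Lphi T Φ u u' →
      c * (luxNorm T Φ u + luxNorm T Φ u') ≤
          ‖T⁻¹ • ∫ s in Icc (0:ℝ) T, u s‖ + luxNorm T Φ u' ∧
        ‖T⁻¹ • ∫ s in Icc (0:ℝ) T, u s‖ + luxNorm T Φ u' ≤
          C * (luxNorm T Φ u + luxNorm T Φ u') := by
  obtain ⟨r, hr, hΦr⟩ := exists_r T hT Φ hΦ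
  obtain ⟨R, hR0, hR⟩ := exists_R Φ hΦ
  set K : ℝ := 1 + R * T with hKdef
  have hK0 : (0:ℝ) < K := by positivity
  set m : ℝ := min r 1 with hmdef
  have hm0 : (0:ℝ) < m := lt_min hr one_pos
  refine ⟨m / (K + 1), by positivity, K / T + 1, by positivity, ?_⟩
  intro u u' hW
  obtain ⟨hu', hLφ, hrep⟩ := hW
  have huI : IntegrableOn u (Icc (0:ℝ) T) := u_integrableOn T hT u u' hu' hrep
  set ubar : ℝ := ‖T⁻¹ • ∫ s in Icc (0:ℝ) T, u s‖ with hubar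
  have hubar0 : 0 ≤ ubar := norm_nonneg _
  have hS' := lux_set_nonempty_of_mem T Φ hΦ u' hLφ
  have hI' : ∫ t in Icc (0:ℝ) T, ‖u' t‖ ≤ K * luxNorm T Φ u' :=
    integral_norm_le_lux T hT Φ R hR0 hR u' hu' hS'
  have hbound := sup_bound T hT u u' hu' hrep huI
  set M : ℝ := ubar + ∫ s in Icc (0:ℝ) T, ‖u' s‖ with hMdef
  have hInt'0 : 0 ≤ ∫ s in Icc (0:ℝ) T, ‖u' s‖ :=
    setIntegral_nonneg measurableSet_Icc fun t _ => norm_nonneg _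
  have hM0 : 0 ≤ M := add_nonneg hubar0 hInt'0
  have hlux_u : luxNorm T Φ u ≤ M / r := luxNorm_le_of_bound T hT Φ r hr hΦr u M hbound
  have hl0 : 0 ≤ luxNorm T Φ u := luxNorm_nonneg _ _ _
  have hl'0 : 0 ≤ luxNorm T Φ u' := luxNorm_nonneg _ _ _
  have hSu : {l : ℝ | 0 < l ∧ rhoE T Φ (fun t => l⁻¹ • u t) ≤ 1}.Nonempty :=
    ⟨M / r + 1, mem_lux_set_of_bound T hT Φ r hr hΦr u M hbound _
      (by linarith [div_nonneg hM0 hr.le]) (by linarith)⟩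
  have hIu : ∫ t in Icc (0:ℝ) T, ‖u t‖ ≤ K * luxNorm T Φ u :=
    integral_norm_le_lux T hT Φ R hR0 hR u huI hSu
  constructor
  · -- lower bound
    have e2 : r * luxNorm T Φ u ≤ ubar + K * luxNorm T Φ u' := by
      have e1 : luxNorm T Φ u ≤ (ubar + K * luxNorm T Φ u') / r := by
        refine hlux_u.trans ?_
        rw [hMdef]
        gcongr
      have := (le_div_iff₀ hr).1 e1
      linarith [this]
    have a1 : m * luxNorm T Φ u ≤ ubar + K * luxNorm T Φ u' :=
      le_trans (mul_le_mul_of_nonneg_right (min_le_left r 1) hl0) e2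
    have a2 : m * luxNorm T Φ u' ≤ 1 * luxNorm T Φ u' :=
      mul_le_mul_of_nonneg_right (min_le_right r 1) hl'0
    have a3 : m * (luxNorm T Φ u + luxNorm T Φ u') ≤ (K + 1) * (ubar + luxNorm T Φ u') := by
      nlinarith [mul_nonneg hK0.le hubar0]
    rw [div_mul_eq_mul_div, div_le_iff₀ (by positivity : (0:ℝ) < K + 1)]
    nlinarith [a3]
  · -- upper bound
    have b0 : ubar ≤ T⁻¹ * ∫ t in Icc (0:ℝ) T, ‖u t‖ := by
      rw [hubar, norm_smul, Real.norm_eq_abs, abs_of_pos (inv_pos.2 hT)]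
      exact mul_le_mul_of_nonneg_left (norm_integral_le_integral_norm _) (inv_pos.2 hT).le
    have b1 : ubar ≤ K / T * luxNorm T Φ u := by
      refine b0.trans ?_
      calc T⁻¹ * ∫ t in Icc (0:ℝ) T, ‖u t‖ ≤ T⁻¹ * (K * luxNorm T Φ u) :=
            mul_le_mul_of_nonneg_left hIu (inv_pos.2 hT).le
        _ = K / T * luxNorm T Φ u := by ring
    nlinarith [b1, mul_nonneg (div_nonneg hK0.le hT.le) hl'0, hl0]
end
end
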